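/- For every supported set E, the functor (−) × E on supported sets is left adjoint to the exponential functor (−)^E, where X^E consists of all functions f: E → X such that the union over e ∈ E of s_X(f(e)) \ s_E(e) is finite, with this union as the support of f. Hence Supp(A) is cartesian closed. -/

import Mathlib

open CategoryTheory

/-- A supported set over `A`: a set with a finite support for each element. -/
structure SuppSet (A : Type) : Type 1 where
  carrier : Type
  supp : carrier → Set A
  finite : ∀ x, (supp x).Finite

variable {A : Type}

instance : Category (SuppSet A) where
  Hom X Y := {f : X.carrier → Y.carrier // ∀ x, Y.supp (f x) ⊆ X.supp x}
  id _ := ⟨fun x => x, fun _ => subset_rfl⟩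
  comp f g := ⟨fun x => g.1 (f.1 x), fun x => (g.2 _).trans (f.2 x)⟩
  id_comp _ := Subtype.ext rfl
  comp_id _ := Subtype.ext rfl
  assoc _ _ _ := Subtype.ext rfl

/-- The forgetful functor from supported sets to sets. -/
def Forget (A : Type) : SuppSet A ⥤ Type where
  obj X := X.carrier
  map f := TypeCat.ofHom f.1
  map_id _ := rfl
  map_comp _ _ := rfl

/-- The product functor `(−) × E` on supported sets, with union supports. -/
def prodFunctor (E : SuppSet A) : SuppSet A ⥤ SuppSet A where
  obj X :=
    { carrier := X.carrier × E.carrier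
      supp := fun p => X.supp p.1 ∪ E.supp p.2
      finite := fun p => (X.finite p.1).union (E.finite p.2) }
  map f := ⟨fun p => (f.1 p.1, p.2), fun p => Set.union_subset_union_left _ (f.2 p.1)⟩
  map_id _ := Subtype.ext rfl
  map_comp _ _ := Subtype.ext rfl

/-- The exponential object `X^E`: functions `E → X` such that the union of
`supp(f e) \ supp(e)` is finite, supported by that union. -/
def expObj (E X : SuppSet A) : SuppSet A where
  carrier := {f : E.carrier → X.carrier // (⋃ e, X.supp (f e) \ E.supp e).Finite}
  supp := fun f => ⋃ e, X.supp (f.1 e) \ E.supp e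
  finite := fun f => f.2


/-- The exponential functor `(−)^E`. -/
def expFunctor (E : SuppSet A) : SuppSet A ⥤ SuppSet A where
  obj X := expObj E X
  map {X Y} f :=
    ⟨fun g => ⟨fun e => f.1 (g.1 e),
      (g.2.subset (Set.iUnion_mono fun e => Set.diff_subset_diff_left (f.2 _)))⟩,
      fun g => Set.iUnion_mono fun e => Set.diff_subset_diff_left (f.2 _)⟩
  map_id _ := Subtype.ext rfl
  map_comp _ _ := Subtype.ext rfl

lemma expEquiv_aux {E X Y : SuppSet A} (φ : (prodFunctor E).obj X ⟶ Y) (x : X.carrier) :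
    (⋃ e, Y.supp (φ.1 (x, e)) \ E.supp e) ⊆ X.supp x := by
  refine Set.iUnion_subset fun e a ha => ?_
  rcases φ.2 (x, e) ha.1 with h | h
  · exact h
  · exact absurd h ha.2

/-- For every supported set `E`, the functor `(−) × E` is left adjoint to
the exponential functor `(−)^E` given on objects by `expObj E`; hence `Supp(A)` is
cartesian closed. -/
theorem prod_adj_exp (A : Type) (E : SuppSet A) :
    ∃ Exp : SuppSet A ⥤ SuppSet A,
      (∀ X : SuppSet A, Exp.obj X = expObj E X) ∧
      Nonempty (prodFunctor E ⊣ Exp) := by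
  refine ⟨expFunctor E, fun _ => rfl, ⟨Adjunction.mkOfHomEquiv
    { homEquiv := fun X Y =>
        { toFun := fun φ => ⟨fun x => ⟨fun e => φ.1 (x, e),
            (X.finite x).subset (expEquiv_aux φ x)⟩, fun x => expEquiv_aux φ x⟩
          invFun := fun ψ => ⟨fun p => (ψ.1 p.1).1 p.2, fun p a ha => by
            by_cases he : a ∈ E.supp p.2
            · exact Or.inr he
            · exact Or.inl (ψ.2 p.1 (Set.mem_iUnion.2 ⟨p.2, ha, he⟩))⟩
          left_inv := fun φ => Subtype.ext rfl
          right_inv := fun ψ => Subtype.ext rfl }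
      homEquiv_naturality_left_symm := fun _ _ => Subtype.ext rfl
      homEquiv_naturality_right := fun _ _ => Subtype.ext rfl }⟩⟩
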